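/- If f(z) = Σ a_n z^n is analytic in the unit disc with sup_{|z|<1} |f(z)| ≤ 1, then Σ |a_n| r^n ≤ 1 for all 0 ≤ r ≤ 1/3. -/

import Mathlib

open Metric MeasureTheory Complex Real Filter

lemma exp_int_integral (m : ℤ) :
    ∫ θ in (0:ℝ)..(2*Real.pi), Complex.exp ((m:ℂ) * θ * Complex.I) =
      if m = 0 then ((2*Real.pi : ℝ) : ℂ) else 0 := by
  rcases eq_or_ne m 0 with h|h
  · simp [h]
  · rw [if_neg h]
    have hc : (m:ℂ) * Complex.I ≠ 0 := by
      simp [Complex.I_ne_zero, h]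
    have key : ∀ θ : ℝ, (m:ℂ) * θ * Complex.I = ((m:ℂ) * Complex.I) * θ := by
      intro θ; ring
    simp_rw [key]
    rw [integral_exp_mul_complex hc]
    have h1 : (m:ℂ) * Complex.I * (2*Real.pi : ℝ) = (m:ℤ) * (2 * Real.pi * Complex.I) := by
      push_cast; ring
    rw [h1, Complex.exp_int_mul_two_pi_mul_I]
    simp

set_option maxHeartbeats 1000000 in
lemma fourier_coeff (f : ℂ → ℂ) (a : ℕ → ℂ)
    (hf : ∀ z ∈ ball (0 : ℂ) 1, HasSum (fun n : ℕ => a n * z ^ n) (f z))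
    (ρ : ℝ) (h0 : 0 ≤ ρ) (h1 : ρ < 1)
    (hsum : Summable (fun k : ℕ => ‖a k‖ * ρ ^ k)) (m : ℤ) :
    HasSum (fun k : ℕ => a k * (ρ:ℂ)^k * (if (k:ℤ) + m = 0 then ((2*Real.pi : ℝ):ℂ) else 0))
      (∫ θ in (0:ℝ)..(2*Real.pi),
        f ((ρ:ℂ) * Complex.exp (θ * Complex.I)) * Complex.exp ((m:ℂ) * θ * Complex.I)) := by
  have hπ : (0:ℝ) ≤ 2 * Real.pi := by positivity
  set z : ℝ → ℂ := fun θ => (ρ:ℂ) * Complex.exp (θ * Complex.I) with hz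
  have hzball : ∀ θ : ℝ, z θ ∈ ball (0:ℂ) 1 := by
    intro θ
    simp only [hz, mem_ball, dist_zero_right, norm_mul,
      Complex.norm_real, Real.norm_eq_abs, Complex.norm_exp_ofReal_mul_I, mul_one, _root_.abs_of_nonneg h0]
    exact h1
  -- the rewritten summand
  have hFeq : ∀ (k : ℕ) (θ : ℝ),
      a k * (z θ)^k * Complex.exp ((m:ℂ) * θ * Complex.I)
        = a k * (ρ:ℂ)^k * Complex.exp ((((k:ℤ) + m : ℤ):ℂ) * θ * Complex.I) := by
    intro k θ
    simp only [hz, mul_pow, ← Complex.exp_nat_mul]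
    rw [show ((((k:ℤ) + m : ℤ):ℂ) * θ * Complex.I)
        = (k:ℂ) * (θ * Complex.I) + (m:ℂ) * (θ * Complex.I) by push_cast; ring,
      Complex.exp_add]
    ring
  -- pointwise HasSum
  have hptsum : ∀ θ : ℝ,
      HasSum (fun k : ℕ => a k * (ρ:ℂ)^k * Complex.exp ((((k:ℤ) + m : ℤ):ℂ) * θ * Complex.I))
        (f (z θ) * Complex.exp ((m:ℂ) * θ * Complex.I)) := by
    intro θ
    have h2 := (hf (z θ) (hzball θ)).mul_right (Complex.exp ((m:ℂ) * θ * Complex.I))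
    have e : (fun k : ℕ => a k * (z θ)^k * Complex.exp ((m:ℂ) * θ * Complex.I))
        = fun k : ℕ => a k * (ρ:ℂ)^k * Complex.exp ((((k:ℤ) + m : ℤ):ℂ) * θ * Complex.I) :=
      funext fun k => hFeq k θ
    simpa [e] using h2
  -- norm of each term
  have hnorm : ∀ (k : ℕ) (θ : ℝ),
      ‖a k * (ρ:ℂ)^k * Complex.exp ((((k:ℤ) + m : ℤ):ℂ) * θ * Complex.I)‖ = ‖a k‖ * ρ^k := by
    intro k θ
    have : ((((k:ℤ) + m : ℤ):ℂ) * θ * Complex.I) = ((((k:ℤ) + m : ℤ):ℝ) * θ : ℝ) * Complex.I := by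
      push_cast; ring
    rw [this, norm_mul,
      Complex.norm_exp_ofReal_mul_I, mul_one, norm_mul, norm_pow]
    simp [Complex.norm_real, _root_.abs_of_nonneg h0]
  set μ : Measure ℝ := volume.restrict (Set.Ioc (0:ℝ) (2*Real.pi)) with hμ
  have hcont : ∀ k : ℕ, Continuous
      (fun θ : ℝ => a k * (ρ:ℂ)^k * Complex.exp ((((k:ℤ) + m : ℤ):ℂ) * θ * Complex.I)) := by
    intro k
    fun_prop
  have hint : ∀ k : ℕ, Integrable
      (fun θ : ℝ => a k * (ρ:ℂ)^k * Complex.exp ((((k:ℤ) + m : ℤ):ℂ) * θ * Complex.I)) μ :=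
    fun k => (hcont k).integrableOn_Ioc
  have hnormint : ∀ k : ℕ,
      (∫ θ, ‖a k * (ρ:ℂ)^k * Complex.exp ((((k:ℤ) + m : ℤ):ℂ) * θ * Complex.I)‖ ∂μ)
        = (2*Real.pi) * (‖a k‖ * ρ^k) := by
    intro k
    simp_rw [hnorm k]
    rw [integral_const]
    simp only [hμ, Measure.restrict_apply, Set.univ_inter, MeasurableSet.univ,
      Real.volume_Ioc, smul_eq_mul]
    rw [measureReal_restrict_apply_univ, Real.volume_real_Ioc_of_le hπ]
    ring_nf
  have hsum2 : Summable (fun k : ℕ =>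
      ∫ θ, ‖a k * (ρ:ℂ)^k * Complex.exp ((((k:ℤ) + m : ℤ):ℂ) * θ * Complex.I)‖ ∂μ) := by
    rw [funext hnormint]
    exact hsum.mul_left _
  have H := hasSum_integral_of_summable_integral_norm hint hsum2
  have htsum_eq : ∀ θ : ℝ,
      (∑' k : ℕ, a k * (ρ:ℂ)^k * Complex.exp ((((k:ℤ) + m : ℤ):ℂ) * θ * Complex.I))
        = f (z θ) * Complex.exp ((m:ℂ) * θ * Complex.I) := fun θ => (hptsum θ).tsum_eq
  have hiv : (∫ θ in (0:ℝ)..(2*Real.pi),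
      f ((ρ:ℂ) * Complex.exp (θ * Complex.I)) * Complex.exp ((m:ℂ) * θ * Complex.I))
        = ∫ θ, f (z θ) * Complex.exp ((m:ℂ) * θ * Complex.I) ∂μ := by
    rw [intervalIntegral.integral_of_le hπ]
  rw [hiv]
  have hterm : ∀ k : ℕ,
      (∫ θ, a k * (ρ:ℂ)^k * Complex.exp ((((k:ℤ) + m : ℤ):ℂ) * θ * Complex.I) ∂μ)
        = a k * (ρ:ℂ)^k * (if (k:ℤ) + m = 0 then ((2*Real.pi : ℝ):ℂ) else 0) := by
    intro k
    rw [integral_const_mul]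
    congr 1
    have : (∫ θ, Complex.exp ((((k:ℤ) + m : ℤ):ℂ) * θ * Complex.I) ∂μ)
        = ∫ θ in (0:ℝ)..(2*Real.pi), Complex.exp ((((k:ℤ) + m : ℤ):ℂ) * θ * Complex.I) := by
      rw [intervalIntegral.integral_of_le hπ]
    rw [this, exp_int_integral]
  rw [funext hterm] at H
  have hcongr : (∫ θ, (∑' k : ℕ,
      a k * (ρ:ℂ)^k * Complex.exp ((((k:ℤ) + m : ℤ):ℂ) * θ * Complex.I)) ∂μ)
        = ∫ θ, f (z θ) * Complex.exp ((m:ℂ) * θ * Complex.I) ∂μ :=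
    integral_congr_ae (Filter.EventuallyEq.of_eq (funext htsum_eq))
  rwa [hcongr] at H
set_option maxHeartbeats 1000000 in
lemma summ_aux (a : ℕ → ℂ)
    (hf : ∀ z ∈ ball (0 : ℂ) 1, Summable (fun n : ℕ => a n * z ^ n))
    (ρ : ℝ) (h0 : 0 ≤ ρ) (h1 : ρ < 1) :
    Summable (fun k : ℕ => ‖a k‖ * ρ ^ k) := by
  set σ : ℝ := (1 + ρ) / 2 with hσ
  have hσ0 : 0 < σ := by positivity
  have hρσ : ρ < σ := by simp only [hσ]; linarith
  have hσ1 : σ < 1 := by simp only [hσ]; linarith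
  have hz : (σ : ℂ) ∈ ball (0 : ℂ) 1 := by
    simp [abs_of_pos hσ0, hσ1]
  have hsum := hf _ hz
  have htend : Tendsto (fun k => ‖a k * (σ:ℂ) ^ k‖) atTop (nhds 0) := by
    simpa using hsum.tendsto_atTop_zero.norm
  obtain ⟨C, hC⟩ := htend.bddAbove_range
  have hCb : ∀ k, ‖a k‖ * σ ^ k ≤ C := by
    intro k
    have := hC (Set.mem_range_self k)
    simpa [map_mul, map_pow,
      abs_of_pos hσ0] using this
  have hC0 : 0 ≤ C := le_trans (by positivity) (hCb 0)
  have hq : ρ / σ < 1 := (div_lt_one hσ0).2 hρσ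
  have hq0 : 0 ≤ ρ / σ := by positivity
  refine Summable.of_nonneg_of_le (fun k => by positivity) ?_
    ((summable_geometric_of_lt_one hq0 hq).mul_left C)
  · intro k
    have hσk : (0:ℝ) < σ ^ k := by positivity
    have : ‖a k‖ * ρ ^ k = (‖a k‖ * σ ^ k) * (ρ / σ) ^ k := by
      field_simp
      rw [mul_assoc _ (σ ^ k), ← mul_pow, mul_comm σ, div_mul_cancel₀ ρ hσ0.ne']
    rw [this]
    exact mul_le_mul_of_nonneg_right (hCb k) (by positivity)

lemma intervalIntegral_conj (g : ℝ → ℂ) (A B : ℝ) :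
    (∫ θ in A..B, (starRingEnd ℂ) (g θ)) = (starRingEnd ℂ) (∫ θ in A..B, g θ) := by
  rw [intervalIntegral, intervalIntegral, integral_conj,
    integral_conj, ← map_sub]

set_option maxHeartbeats 2000000 in
lemma wiener (f : ℂ → ℂ) (a : ℕ → ℂ)
    (hf : ∀ z ∈ ball (0 : ℂ) 1, HasSum (fun n : ℕ => a n * z ^ n) (f z))
    (hb : ∀ z ∈ ball (0 : ℂ) 1, ‖f z‖ ≤ 1)
    (n : ℕ) (hn : 1 ≤ n) : ‖a n‖ ≤ 2 * (1 - ‖a 0‖) := by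
  obtain ⟨c, hc1, hc2⟩ : ∃ c : ℂ, ‖c‖ = 1 ∧ c * a 0 = (‖a 0‖ : ℂ) := by
    rcases eq_or_ne (a 0) 0 with h|h
    · exact ⟨1, by simp, by simp [h]⟩
    · refine ⟨(starRingEnd ℂ) (a 0) / (‖a 0‖ : ℂ), ?_, ?_⟩
      · rw [norm_div, RCLike.norm_conj]
        have h0 : ‖a 0‖ ≠ 0 := norm_ne_zero_iff.mpr h
        rw [Complex.norm_real, Real.norm_eq_abs,
          _root_.abs_of_nonneg (norm_nonneg _), div_self h0]
      · have h0 : ‖a 0‖ ≠ 0 := norm_ne_zero_iff.mpr h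
        rw [div_mul_eq_mul_div, mul_comm, Complex.mul_conj]
        have hns : Complex.normSq (a 0) = ‖a 0‖^2 := by
          rw [Complex.normSq_eq_norm_sq]
        rw [hns]
        rw [div_eq_iff (by exact_mod_cast h0)]
        push_cast
        ring
  have key : ∀ ρ : ℝ, 0 < ρ → ρ < 1 → ‖a n‖ * ρ ^ n ≤ 2 * (1 - ‖a 0‖) := by
    intro ρ hρ0 hρ1
    have hπ : (0:ℝ) ≤ 2 * Real.pi := by positivity
    have hπ0 : (0:ℝ) < Real.pi := Real.pi_pos
    have hsum := summ_aux a (fun z hz => (hf z hz).summable) ρ hρ0.le hρ1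
    set F : ℝ → ℂ := fun θ => f ((ρ:ℂ) * Complex.exp (θ * Complex.I)) with hF
    have hzball : ∀ θ : ℝ, (ρ:ℂ) * Complex.exp (θ * Complex.I) ∈ ball (0:ℂ) 1 := by
      intro θ
      simp only [mem_ball, dist_zero_right, norm_mul,
        Complex.norm_real, Real.norm_eq_abs, Complex.norm_exp_ofReal_mul_I, mul_one, _root_.abs_of_nonneg hρ0.le]
      exact hρ1
    have hFle : ∀ θ, ‖F θ‖ ≤ 1 := fun θ => hb _ (hzball θ)
    have hFcont : Continuous F := by
      have he : F = fun θ : ℝ => ∑' k, a k * ((ρ:ℂ) * Complex.exp ((θ:ℂ) * Complex.I))^k :=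
        funext fun θ => ((hf _ (hzball θ)).tsum_eq).symm
      rw [he]
      refine continuous_tsum (fun k => by fun_prop) hsum (fun k θ => ?_)
      rw [norm_mul, norm_pow, norm_mul]
      simp [Complex.norm_real, Complex.norm_exp_ofReal_mul_I,
        _root_.abs_of_nonneg hρ0.le]
    -- Fourier integrals
    have J1 : (∫ θ in (0:ℝ)..(2*Real.pi), F θ * Complex.exp (((-(n:ℤ) : ℤ):ℂ) * θ * Complex.I))
        = a n * (ρ:ℂ)^n * ((2*Real.pi : ℝ) : ℂ) := by
      have h := fourier_coeff f a hf ρ hρ0.le hρ1 hsum (-(n:ℤ))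
      have e1 : (fun k : ℕ => a k * (ρ:ℂ)^k * (if (k:ℤ) + -(n:ℤ) = 0 then ((2*Real.pi : ℝ):ℂ) else 0))
          = fun k : ℕ => if k = n then a n * (ρ:ℂ)^n * ((2*Real.pi : ℝ):ℂ) else 0 := by
        funext k
        have hiff : ((k:ℤ) + -(n:ℤ) = 0) ↔ k = n := by omega
        rcases eq_or_ne k n with hk|hk
        · subst hk; simp [hiff]
        · simp [hk, hiff]
      rw [e1] at h
      exact h.unique (hasSum_ite_eq n _)
    have J2 : (∫ θ in (0:ℝ)..(2*Real.pi), F θ * Complex.exp ((((n:ℤ) : ℤ):ℂ) * θ * Complex.I))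
        = 0 := by
      have h := fourier_coeff f a hf ρ hρ0.le hρ1 hsum (n:ℤ)
      have e1 : (fun k : ℕ => a k * (ρ:ℂ)^k * (if (k:ℤ) + (n:ℤ) = 0 then ((2*Real.pi : ℝ):ℂ) else 0))
          = fun _ : ℕ => (0:ℂ) := by
        funext k
        have : ¬ ((k:ℤ) + (n:ℤ) = 0) := by omega
        simp [this]
      rw [e1] at h
      exact h.unique hasSum_zero
    have J0 : (∫ θ in (0:ℝ)..(2*Real.pi), F θ) = a 0 * ((2*Real.pi : ℝ):ℂ) := by
      have h := fourier_coeff f a hf ρ hρ0.le hρ1 hsum 0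
      have e1 : (fun k : ℕ => a k * (ρ:ℂ)^k * (if (k:ℤ) + (0:ℤ) = 0 then ((2*Real.pi : ℝ):ℂ) else 0))
          = fun k : ℕ => if k = 0 then a 0 * ((2*Real.pi : ℝ):ℂ) else 0 := by
        funext k
        have hiff : ((k:ℤ) + (0:ℤ) = 0) ↔ k = 0 := by omega
        rcases eq_or_ne k 0 with hk|hk
        · subst hk; simp [hiff]
        · simp [hk, hiff]
      rw [e1] at h
      have h2 := h.unique (hasSum_ite_eq 0 _)
      have e2 : (fun θ : ℝ => F θ * Complex.exp (((0:ℤ):ℂ) * θ * Complex.I)) = F := by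
        funext θ; simp
      rw [e2] at h2
      exact h2
    -- the test function
    set en : ℝ → ℂ := fun θ => Complex.exp (((-(n:ℤ) : ℤ):ℂ) * θ * Complex.I) with hen
    have hencont : Continuous en := by
      apply Continuous.cexp; fun_prop
    have hennorm : ∀ θ : ℝ, ‖en θ‖ = 1 := by
      intro θ
      have : ((-(n:ℤ) : ℤ):ℂ) * θ * Complex.I = (((-(n:ℤ) : ℤ):ℝ) * θ : ℝ) * Complex.I := by
        push_cast; ring
      simp only [hen]
      rw [this, Complex.norm_exp_ofReal_mul_I]
    set G : ℝ → ℂ := fun θ => ((2:ℂ) - c * F θ - (starRingEnd ℂ) (c * F θ)) * en θ with hG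
    -- integrability
    have hi1 : IntervalIntegrable (fun θ : ℝ => (2:ℂ) * en θ) volume 0 (2*Real.pi) :=
      (continuous_const.mul hencont).intervalIntegrable _ _
    have hi2 : IntervalIntegrable (fun θ : ℝ => c * (F θ * en θ)) volume 0 (2*Real.pi) :=
      (continuous_const.mul (hFcont.mul hencont)).intervalIntegrable _ _
    have hi3 : IntervalIntegrable (fun θ : ℝ => (starRingEnd ℂ) (c * F θ) * en θ) volume 0 (2*Real.pi) :=
      (((continuous_const.mul hFcont).star).mul hencont).intervalIntegrable _ _
    -- value of ∫ G
    have hGsplit : (fun θ : ℝ => G θ)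
        = fun θ : ℝ => ((2:ℂ) * en θ - c * (F θ * en θ)) - (starRingEnd ℂ) (c * F θ) * en θ := by
      funext θ; rw [hG]; ring
    have hinte : (∫ θ in (0:ℝ)..(2*Real.pi), en θ) = 0 := by
      rw [hen]
      rw [exp_int_integral, if_neg (by omega : ¬ (-(n:ℤ) = 0))]
    have hint3 : (∫ θ in (0:ℝ)..(2*Real.pi), (starRingEnd ℂ) (c * F θ) * en θ) = 0 := by
      have heq : Set.EqOn (fun θ : ℝ => (starRingEnd ℂ) (c * F θ) * en θ)
          (fun θ : ℝ => (starRingEnd ℂ) (c * (F θ * Complex.exp ((((n:ℤ) : ℤ):ℂ) * θ * Complex.I))))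
          (Set.uIcc 0 (2*Real.pi)) := by
        intro θ _
        simp only [hen, map_mul]
        rw [← Complex.exp_conj]
        have hcj : (starRingEnd ℂ) ((((n:ℤ) : ℤ):ℂ) * θ * Complex.I)
            = ((-(n:ℤ) : ℤ):ℂ) * θ * Complex.I := by
          simp only [map_mul, Complex.conj_I, Complex.conj_ofReal, map_intCast]
          push_cast
          ring
        rw [hcj]
        ring
      rw [intervalIntegral.integral_congr heq, intervalIntegral_conj,
        intervalIntegral.integral_const_mul, J2]
      simp
    have hJval : (∫ θ in (0:ℝ)..(2*Real.pi), G θ)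
        = -(c * (a n * (ρ:ℂ)^n * ((2*Real.pi : ℝ):ℂ))) := by
      rw [hGsplit, intervalIntegral.integral_sub (hi1.sub hi2) hi3,
        intervalIntegral.integral_sub hi1 hi2, intervalIntegral.integral_const_mul,
        intervalIntegral.integral_const_mul, hinte, hint3, J1]
      ring
    -- pointwise norm of G
    have hGnorm : ∀ θ : ℝ, ‖G θ‖ = 2 - 2*(c * F θ).re := by
      intro θ
      rw [hG]
      simp only []
      rw [norm_mul, hennorm, mul_one]
      have h2 : (2:ℂ) - c * F θ - (starRingEnd ℂ) (c * F θ)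
          = ((2 - 2*(c * F θ).re : ℝ) : ℂ) := by
        rw [sub_sub, Complex.add_conj]
        push_cast
        ring
      rw [h2, Complex.norm_real, Real.norm_eq_abs, _root_.abs_of_nonneg]
      have hre : (c * F θ).re ≤ 1 := by
        refine le_trans (Complex.re_le_norm _) ?_
        rw [norm_mul, hc1, one_mul]
        exact hFle θ
      linarith
    -- the real integral of ‖G‖
    have hreal : (∫ θ in (0:ℝ)..(2*Real.pi), (2 - 2*(c * F θ).re : ℝ))
        = 4*Real.pi*(1 - ‖a 0‖) := by
      have hofreal : (∫ θ in (0:ℝ)..(2*Real.pi), ((2 - 2*(c * F θ).re : ℝ) : ℂ))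
          = (((∫ θ in (0:ℝ)..(2*Real.pi), (2 - 2*(c * F θ).re : ℝ)) : ℝ) : ℂ) :=
        intervalIntegral.integral_ofReal
      have hcplx : (∫ θ in (0:ℝ)..(2*Real.pi), ((2 - 2*(c * F θ).re : ℝ) : ℂ))
          = ((4*Real.pi*(1 - ‖a 0‖) : ℝ) : ℂ) := by
        have heq2 : Set.EqOn (fun θ : ℝ => ((2 - 2*(c * F θ).re : ℝ) : ℂ))
            (fun θ : ℝ => (2:ℂ) - c * F θ - (starRingEnd ℂ) (c * F θ))
            (Set.uIcc 0 (2*Real.pi)) := by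
          intro θ _
          dsimp only
          rw [sub_sub, Complex.add_conj]
          push_cast
          ring
        rw [intervalIntegral.integral_congr heq2]
        have hiF : IntervalIntegrable F volume 0 (2*Real.pi) :=
          hFcont.intervalIntegrable _ _
        have hicF : IntervalIntegrable (fun θ : ℝ => c * F θ) volume 0 (2*Real.pi) :=
          (continuous_const.mul hFcont).intervalIntegrable _ _
        have hiconj : IntervalIntegrable (fun θ : ℝ => (starRingEnd ℂ) (c * F θ)) volume 0 (2*Real.pi) :=
          ((continuous_const.mul hFcont).star).intervalIntegrable _ _
        rw [intervalIntegral.integral_sub ((intervalIntegrable_const).sub hicF) hiconj,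
          intervalIntegral.integral_sub (intervalIntegrable_const) hicF,
          intervalIntegral.integral_const_mul, intervalIntegral_conj,
          intervalIntegral.integral_const_mul, J0, intervalIntegral.integral_const]
        have hca : c * (a 0 * ((2*Real.pi:ℝ):ℂ)) = ((‖a 0‖ * (2*Real.pi) : ℝ):ℂ) := by
          rw [← mul_assoc, hc2]; push_cast; ring
        rw [hca, Complex.conj_ofReal, sub_zero, Complex.real_smul]
        push_cast
        ring
      exact Complex.ofReal_inj.mp (by rw [← hofreal, hcplx])
    -- conclude the bound for this ρ
    have hnormJ : ‖∫ θ in (0:ℝ)..(2*Real.pi), G θ‖ = 2*Real.pi * (‖a n‖ * ρ^n) := by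
      rw [hJval, norm_neg, norm_mul, hc1, one_mul, norm_mul, norm_mul, norm_pow]
      rw [Complex.norm_real ρ, Real.norm_eq_abs ρ, _root_.abs_of_nonneg hρ0.le,
        Complex.norm_real (2*Real.pi), Real.norm_eq_abs (2*Real.pi), _root_.abs_of_nonneg hπ]
      ring
    have hbound : ‖∫ θ in (0:ℝ)..(2*Real.pi), G θ‖ ≤ ∫ θ in (0:ℝ)..(2*Real.pi), ‖G θ‖ :=
      intervalIntegral.norm_integral_le_integral_norm hπ
    have hnormint : (∫ θ in (0:ℝ)..(2*Real.pi), ‖G θ‖) = 4*Real.pi*(1-‖a 0‖) := by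
      simp_rw [hGnorm]
      exact hreal
    have hfin : 2*Real.pi * (‖a n‖ * ρ^n) ≤ 4*Real.pi*(1-‖a 0‖) := by
      rw [← hnormJ, ← hnormint]
      exact hbound
    nlinarith [hfin, hπ0]
  -- take the limit ρ → 1⁻
  have hlim : Filter.Tendsto (fun ρ : ℝ => ‖a n‖ * ρ^n) (nhdsWithin 1 (Set.Iio 1))
      (nhds (‖a n‖)) := by
    have hcont : Continuous fun ρ : ℝ => ‖a n‖ * ρ^n := by fun_prop
    have h2 := (hcont.tendsto 1).mono_left (nhdsWithin_le_nhds (s := Set.Iio 1))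
    simpa using h2
  refine le_of_tendsto hlim ?_
  filter_upwards [Ioo_mem_nhdsLT_of_mem
    (show (1:ℝ) ∈ Set.Ioc 0 1 from ⟨zero_lt_one, le_refl 1⟩)] with ρ hρ
  exact key ρ hρ.1 hρ.2

set_option maxHeartbeats 1000000 in
theorem bohr_classical (f : ℂ → ℂ) (a : ℕ → ℂ)
    (hf : ∀ z ∈ ball (0 : ℂ) 1, HasSum (fun n : ℕ => a n * z ^ n) (f z))
    (hb : ∀ z ∈ ball (0 : ℂ) 1, ‖f z‖ ≤ 1)
    (r : ℝ) (hr0 : 0 ≤ r) (hr : r ≤ 1 / 3) :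
    ∑' n : ℕ, ‖a n‖ * r ^ n ≤ 1 := by
  have hrlt : r < 1 := lt_of_le_of_lt hr (by norm_num)
  have hsumr : Summable (fun k : ℕ => ‖a k‖ * r^k) :=
    summ_aux a (fun z hz => (hf z hz).summable) r hr0 hrlt
  have ha0 : a 0 = f 0 := by
    have h := hf 0 (by simp [mem_ball])
    have e : (fun k : ℕ => a k * (0:ℂ)^k) = fun k => if k = 0 then a 0 else 0 := by
      funext k; rcases k with _|k <;> simp
    rw [e] at h
    exact (hasSum_ite_eq 0 (a 0)).unique h
  have ht1 : ‖a 0‖ ≤ 1 := by rw [ha0]; exact hb 0 (by simp)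
  rw [Summable.tsum_eq_zero_add hsumr]
  simp only [pow_zero, mul_one]
  have htail : (∑' k : ℕ, ‖a (k+1)‖ * r^(k+1)) ≤ ∑' k : ℕ, (2*(1-‖a 0‖)*r) * r^k := by
    refine Summable.tsum_le_tsum (fun k => ?_) ((summable_nat_add_iff 1).2 hsumr)
      ((summable_geometric_of_lt_one hr0 hrlt).mul_left _)
    have hw := wiener f a hf hb (k+1) (by omega)
    calc ‖a (k+1)‖ * r^(k+1) ≤ (2*(1-‖a 0‖)) * r^(k+1) :=
          mul_le_mul_of_nonneg_right hw (by positivity)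
      _ = (2*(1-‖a 0‖)*r) * r^k := by ring
  have hgeo : (∑' k : ℕ, (2*(1-‖a 0‖)*r) * r^k) = (2*(1-‖a 0‖)) * (r * (1-r)⁻¹) := by
    rw [tsum_mul_left, tsum_geometric_of_lt_one hr0 hrlt]
    ring
  have h1r : 0 < 1 - r := by linarith
  have hhalf : r * (1-r)⁻¹ ≤ 1/2 := by
    rw [← div_eq_mul_inv, div_le_div_iff₀ h1r (by norm_num)]
    linarith
  have h1t : 0 ≤ 1 - ‖a 0‖ := by linarith
  have : (2*(1-‖a 0‖)) * (r * (1-r)⁻¹) ≤ (2*(1-‖a 0‖)) * (1/2) :=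
    mul_le_mul_of_nonneg_left hhalf (by linarith)
  have htail2 : (∑' k : ℕ, ‖a (k+1)‖ * r^(k+1)) ≤ 1 - ‖a 0‖ := by
    rw [hgeo] at htail
    linarith
  linarith
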